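/- For K > 0 and a complex number z = u + iρ with u ∈ ℝ and ρ > 0, the integral ∫_{-∞}^{log K} e^{-izx}(K - e^x) dx converges and equals K^{ρ+1-iu}/((ρ - iu)(ρ + 1 - iu)). -/

import Mathlib

open Complex MeasureTheory Set Filter Topology

lemma aux_int (a : ℂ) (ha : 0 < a.re) (c : ℝ) :
    IntegrableOn (fun x : ℝ => Complex.exp (a * x)) (Set.Iic c) volume := by
  have h0 : IntegrableOn (fun x : ℝ => Real.exp (-a.re * x)) (Set.Ioi (-c)) volume :=
    exp_neg_integrableOn_Ioi (-c) ha
  have h1 : IntegrableOn (fun x : ℝ => Real.exp (a.re * x)) (Set.Iio c) volume := by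
    have := ((MeasurePreserving.integrableOn_comp_preimage
      (Measure.measurePreserving_neg (volume : Measure ℝ))
      (Homeomorph.neg ℝ).measurableEmbedding).2 h0)
    have hs : (Neg.neg ⁻¹' Set.Ioi (-c) : Set ℝ) = Set.Iio c := by
      ext x; simp [neg_lt]
    rw [hs] at this
    refine this.congr_fun (fun x _ => ?_) measurableSet_Iio
    simp [Function.comp]
  have h2 : IntegrableOn (fun x : ℝ => Real.exp (a.re * x)) (Set.Iic c) volume := by
    rwa [integrableOn_Iic_iff_integrableOn_Iio]
  refine Integrable.mono' h2 ?_ ?_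
  · exact (Complex.continuous_exp.comp (continuous_const.mul Complex.continuous_ofReal)).aestronglyMeasurable
  · filter_upwards with x
    rw [Complex.norm_exp]
    simp

lemma aux_eq (a : ℂ) (ha : 0 < a.re) (c : ℝ) :
    ∫ x in Set.Iic c, Complex.exp (a * x) = Complex.exp (a * c) / a := by
  have ha0 : a ≠ 0 := fun h => by simp [h] at ha
  have hderiv : ∀ x ∈ Set.Iic c, HasDerivAt (fun x : ℝ => Complex.exp (a * x) / a)
      (Complex.exp (a * x)) x := by
    intro x _
    have h1 : HasDerivAt (fun x : ℝ => a * (x : ℂ)) a x := by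
      simpa using (Complex.ofRealCLM.hasDerivAt (x := x)).const_mul a
    have h2 := (Complex.hasDerivAt_exp (a * x)).comp x h1
    have h3 := h2.div_const a
    exact h3.congr_deriv (mul_div_cancel_right₀ _ ha0)
  have htends : Tendsto (fun x : ℝ => Complex.exp (a * x) / a) atBot (𝓝 0) := by
    rw [tendsto_zero_iff_norm_tendsto_zero]
    have h1 : Tendsto (fun x : ℝ => a.re * x) atBot atBot :=
      (tendsto_id (α := ℝ) (x := atBot)).const_mul_atBot ha
    have h2 : Tendsto (fun x : ℝ => Real.exp (a.re * x) / ‖a‖) atBot (𝓝 0) := by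
      simpa using (Real.tendsto_exp_atBot.comp h1).div_const ‖a‖
    refine h2.congr fun x => ?_
    rw [norm_div, Complex.norm_exp]
    simp
  have := integral_Iic_of_hasDerivAt_of_tendsto' hderiv (aux_int a ha c) htends
  rw [this, sub_zero]

/-- Generalized Fourier transform of the put payoff: for `z = u + iρ` with `ρ > 0`,
`∫_{-∞}^{log K} e^{-izx}(K - e^x) dx = K^{ρ+1-iu}/((ρ-iu)(ρ+1-iu))`. -/
theorem stmt14 (K u ρ : ℝ) (hK : 0 < K) (hρ : 0 < ρ) :
    IntegrableOn (fun x : ℝ => Complex.exp (-I * ((u : ℂ) + ρ * I) * x) *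
        ((K : ℂ) - Complex.exp x)) (Set.Iio (Real.log K)) volume ∧
    ∫ x in Set.Iio (Real.log K), Complex.exp (-I * ((u : ℂ) + ρ * I) * x) *
        ((K : ℂ) - Complex.exp x) =
      (K : ℂ) ^ ((ρ : ℂ) + 1 - I * u) / (((ρ : ℂ) - I * u) * ((ρ : ℂ) + 1 - I * u)) := by
  set a : ℂ := (ρ : ℂ) - I * u with ha_def
  set L := Real.log K with hL
  have ha : 0 < a.re := by simp [ha_def, hρ]
  have hb : 0 < (a + 1).re := by simp [ha_def]; linarith
  have ha0 : a ≠ 0 := fun h => by simp [h] at ha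
  have hb0 : a + 1 ≠ 0 := fun h => by simp [h] at hb
  have hfeq : ∀ x : ℝ, Complex.exp (-I * ((u : ℂ) + ρ * I) * x) * ((K : ℂ) - Complex.exp x)
      = (K : ℂ) * Complex.exp (a * x) - Complex.exp ((a + 1) * x) := by
    intro x
    have h1 : -I * ((u : ℂ) + ρ * I) = a := by
      rw [ha_def]; ring_nf; rw [Complex.I_sq]; ring
    rw [h1, mul_sub, add_mul, one_mul, Complex.exp_add]
    ring
  have hint : IntegrableOn (fun x : ℝ => (K : ℂ) * Complex.exp (a * x)
      - Complex.exp ((a + 1) * x)) (Set.Iic L) volume :=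
    ((aux_int a ha L).const_mul _).sub (aux_int (a + 1) hb L)
  have hint' : IntegrableOn (fun x : ℝ => Complex.exp (-I * ((u : ℂ) + ρ * I) * x) *
      ((K : ℂ) - Complex.exp x)) (Set.Iio L) volume := by
    refine ((hint.congr_fun (fun x _ => (hfeq x).symm) measurableSet_Iic)).mono_set
      Iio_subset_Iic_self
  refine ⟨hint', ?_⟩
  have hKa : Complex.exp (a * L) = (K : ℂ) ^ a := by
    rw [Complex.cpow_def_of_ne_zero (by exact_mod_cast hK.ne')]
    rw [← Complex.ofReal_log hK.le, hL, mul_comm]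
  have hKb : Complex.exp ((a + 1) * L) = (K : ℂ) ^ (a + 1) := by
    rw [Complex.cpow_def_of_ne_zero (by exact_mod_cast hK.ne')]
    rw [← Complex.ofReal_log hK.le, hL, mul_comm]
  calc ∫ x in Set.Iio L, Complex.exp (-I * ((u : ℂ) + ρ * I) * x) * ((K : ℂ) - Complex.exp x)
      = ∫ x in Set.Iic L, ((K : ℂ) * Complex.exp (a * x) - Complex.exp ((a + 1) * x)) := by
        rw [setIntegral_congr_set Iio_ae_eq_Iic]
        exact setIntegral_congr_fun measurableSet_Iic fun x _ => hfeq x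
    _ = (K : ℂ) * (Complex.exp (a * L) / a) - Complex.exp ((a + 1) * L) / (a + 1) := by
        rw [integral_sub ((aux_int a ha L).const_mul _) (aux_int (a + 1) hb L),
          integral_const_mul, aux_eq a ha L, aux_eq (a + 1) hb L]
    _ = (K : ℂ) ^ (a + 1) / (a * (a + 1)) := by
        rw [hKa, hKb, Complex.cpow_add _ _ (by exact_mod_cast hK.ne'), Complex.cpow_one]
        field_simp
        ring
    _ = (K : ℂ) ^ ((ρ : ℂ) + 1 - I * u) / (((ρ : ℂ) - I * u) * ((ρ : ℂ) + 1 - I * u)) := by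
        have : (ρ : ℂ) + 1 - I * u = a + 1 := by rw [ha_def]; ring
        rw [this, ha_def]
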